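/- For an integer t > 3, the following identity of formal power series in q holds: ∏_{n ≥ 1, n ≡ 0, t−1, t, t+1 (mod 2t)} (1 + q^n) = Σ_{a,b,c,d ≥ 0} q^{Q_t(a,b,c,d) + (t/2)b − c + d} / ((q^{2t}; q^{2t})_a (q^t; q^t)_b (q^t; q^t)_c (q^t; q^t)_d), where Q_t(a,b,c,d) = 2ta² + (t/2)b² + tc² + td² + 2tab + 2tac + 2tad + tbc + tbd + tcd. -/

import Mathlib

open PowerSeries Finset

/-- The exponent `Q_t(a,b,c,d) + (t/2)·b + d - c`, where
`Q_t(a,b,c,d) = 2ta² + (t/2)b² + tc² + td² + 2tab + 2tac + 2tad + tbc + tbd + tcd`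
(so `(t/2)b² + (t/2)b = t·b(b+1)/2` is an integer). -/
def capExp (t a b c d : ℕ) : ℕ :=
  2 * t * a ^ 2 + t * (b * (b + 1) / 2) + t * c ^ 2 + t * d ^ 2 +
    2 * t * a * b + 2 * t * a * c + 2 * t * a * d + t * b * c + t * b * d + t * c * d
    + d - c

noncomputable abbrev QX := PowerSeries ℚ

/-- congruence mod X^(N+1) -/
def Ecg (N : ℕ) (A B : QX) : Prop := (X : QX)^(N+1) ∣ (A - B)

lemma Ecg.refl (N : ℕ) (A : QX) : Ecg N A A := by simp [Ecg]

lemma Ecg.symm {N A B} (h : Ecg N A B) : Ecg N B A := by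
  simpa [Ecg, neg_sub] using dvd_neg.mpr h

lemma Ecg.trans {N A B C} (h1 : Ecg N A B) (h2 : Ecg N B C) : Ecg N A C := by
  have := dvd_add h1 h2; simpa [Ecg, sub_add_sub_cancel] using this

lemma Ecg.mul {N A B C D} (h1 : Ecg N A B) (h2 : Ecg N C D) : Ecg N (A*C) (B*D) := by
  have : A*C - B*D = (A - B)*C + B*(C - D) := by ring
  rw [Ecg, this]; exact dvd_add (h1.mul_right C) (h2.mul_left B)

lemma Ecg.add {N A B C D} (h1 : Ecg N A B) (h2 : Ecg N C D) : Ecg N (A+C) (B+D) := by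
  have : A+C - (B+D) = (A - B) + (C - D) := by ring
  rw [Ecg, this]; exact dvd_add h1 h2

lemma Ecg.coeff {N A B} (h : Ecg N A B) {n : ℕ} (hn : n ≤ N) :
    PowerSeries.coeff (R := ℚ) n A = PowerSeries.coeff (R := ℚ) n B := by
  have := (PowerSeries.X_pow_dvd_iff.mp h) n (by omega)
  have : PowerSeries.coeff (R := ℚ) n (A - B) = 0 := this
  simpa [sub_eq_zero] using this

lemma Ecg.Xpow {N e : ℕ} (he : N < e) : Ecg N ((X:QX)^e) 0 := by
  rw [Ecg, sub_zero]; exact pow_dvd_pow _ (by omega)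

lemma Ecg.sum {N : ℕ} {ι : Type*} {s : Finset ι} {f g : ι → QX}
    (h : ∀ i ∈ s, Ecg N (f i) (g i)) : Ecg N (∑ i ∈ s, f i) (∑ i ∈ s, g i) := by
  classical
  induction s using Finset.induction with
  | empty => simpa using Ecg.refl N 0
  | insert _ _ hx ih =>
      rw [Finset.sum_insert hx, Finset.sum_insert hx]
      exact (h _ (Finset.mem_insert_self _ _)).add
        (ih fun i hi => h i (Finset.mem_insert_of_mem hi))

lemma Ecg.prod {N : ℕ} {ι : Type*} {s : Finset ι} {f g : ι → QX}
    (h : ∀ i ∈ s, Ecg N (f i) (g i)) : Ecg N (∏ i ∈ s, f i) (∏ i ∈ s, g i) := by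
  classical
  induction s using Finset.induction with
  | empty => simpa using Ecg.refl N 1
  | insert _ _ hx ih =>
      rw [Finset.prod_insert hx, Finset.prod_insert hx]
      exact (h _ (Finset.mem_insert_self _ _)).mul
        (ih fun i hi => h i (Finset.mem_insert_of_mem hi))

lemma Ecg.of_eq {N : ℕ} {A B : QX} (h : A = B) : Ecg N A B := h ▸ Ecg.refl N A

/-- a term `X^e * u` with `e > N` is congruent to 0. -/
lemma Ecg.xpow_mul {N e : ℕ} (he : N < e) (u : QX) : Ecg N ((X:QX)^e * u) 0 := by
  rw [Ecg, sub_zero]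
  exact Dvd.dvd.mul_right (pow_dvd_pow _ (by omega)) u

/-- the Pochhammer-type product `(X^s; X^s)_k = ∏_{i=1}^k (1 - X^{s i})`. -/
noncomputable def pk (s k : ℕ) : QX := ∏ i ∈ Finset.range k, (1 - (X:QX)^(s*(i+1)))

lemma pk_const (s k : ℕ) (hs : 1 ≤ s) : constantCoeff (R := ℚ) (pk s k) = 1 := by
  rw [pk, map_prod]
  refine Finset.prod_eq_one fun i _ => ?_
  have : s * (i+1) ≠ 0 := by positivity
  simp [this]

lemma pk_mul_inv (s k : ℕ) (hs : 1 ≤ s) : pk s k * (pk s k)⁻¹ = 1 :=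
  PowerSeries.mul_inv_cancel _ (by rw [pk_const s k hs]; norm_num)

lemma pk_succ (s k : ℕ) : pk s (k+1) = pk s k * (1 - (X:QX)^(s*(k+1))) :=
  Finset.prod_range_succ _ _

lemma pk_ne_zero (s k : ℕ) (hs : 1 ≤ s) : pk s k ≠ 0 := fun h => by
  have := pk_const s k hs; rw [h] at this; simp at this

lemma ip_succ (t k : ℕ) (ht : 1 ≤ t) :
    (pk t (k+1))⁻¹ * (1 - (X:QX)^(t*(k+1))) = (pk t k)⁻¹ := by
  apply mul_right_cancel₀ (pk_ne_zero t (k+1) ht)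
  have h1 : (pk t (k+1))⁻¹ * pk t (k+1) = 1 := by
    rw [mul_comm]; exact pk_mul_inv t (k+1) ht
  have h2 : (pk t k)⁻¹ * pk t k = 1 := by
    rw [mul_comm]; exact pk_mul_inv t k ht
  calc (pk t (k+1))⁻¹ * (1 - (X:QX)^(t*(k+1))) * pk t (k+1)
      = ((pk t (k+1))⁻¹ * pk t (k+1)) * (1 - (X:QX)^(t*(k+1))) := by ring
    _ = (1 - (X:QX)^(t*(k+1))) := by rw [h1, one_mul]
    _ = ((pk t k)⁻¹ * pk t k) * (1 - (X:QX)^(t*(k+1))) := by rw [h2, one_mul]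
    _ = (pk t k)⁻¹ * pk t (k+1) := by rw [pk_succ]; ring

/-- exponent in the Euler sum -/
def eulE (t r b : ℕ) : ℕ := t*(b*(b-1)/2) + r*b

lemma eulE_zero (t r : ℕ) : eulE t r 0 = 0 := by simp [eulE]

lemma eulE_shift (t r c : ℕ) : eulE t r (c+1) = r + eulE t (r+t) c := by
  rcases c with _ | c'
  · simp [eulE]
  · obtain ⟨k, hk⟩ := (Nat.even_mul_succ_self c')
    have hc : (c'+1)*c' = c'*(c'+1) := by ring
    have h1 : (c'+1+1)*(c'+1) = c'*(c'+1) + 2*(c'+1) := by ring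
    simp only [eulE, Nat.add_sub_cancel]
    have hdiv1 : (c'+1+1)*(c'+1)/2 = k + (c'+1) := by omega
    have hdiv2 : (c'+1)*c'/2 = k := by omega
    rw [hdiv1, hdiv2]; ring

lemma eulE_step (t r c : ℕ) : eulE t (r+t) (c+1) = (r + eulE t (r+t) c) + t*(c+1) := by
  have h1 := eulE_shift t r c
  have h2 : eulE t (r+t) (c+1) = eulE t r (c+1) + t*(c+1) := by
    simp only [eulE]; ring
  omega

/-- exact functional equation for the truncated Euler sum -/
lemma euler_sum_fe (t r B : ℕ) (ht : 1 ≤ t) (hB : 1 ≤ B) :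
    (∑ b ∈ Finset.range B, (X:QX)^(eulE t r b) * (pk t b)⁻¹) =
    (1 + (X:QX)^r) * (∑ b ∈ Finset.range B, (X:QX)^(eulE t (r+t) b) * (pk t b)⁻¹)
      - (X:QX)^(r + eulE t (r+t) (B-1)) * (pk t (B-1))⁻¹ := by
  obtain ⟨B', rfl⟩ : ∃ B', B = B' + 1 := ⟨B - 1, by omega⟩
  set g : ℕ → QX := fun b => (X:QX)^(eulE t (r+t) b) * (pk t b)⁻¹ with hg
  have key : ∀ c : ℕ, (X:QX)^(eulE t r (c+1)) * (pk t (c+1))⁻¹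
      = g (c+1) + (X:QX)^r * g c := by
    intro c
    rw [hg]
    simp only []
    rw [eulE_shift t r c, eulE_step t r c, pow_add, pow_add, pow_add]
    rw [← ip_succ t c ht]
    ring
  have hsum : ∑ x ∈ Finset.range (B'+1), (X:QX)^(eulE t r x) * (pk t x)⁻¹
      = (∑ x ∈ Finset.range B', g (x+1)) + (X:QX)^r * (∑ x ∈ Finset.range B', g x)
        + (X:QX)^(eulE t r 0) * (pk t 0)⁻¹ := by
    rw [Finset.sum_range_succ' (fun b => (X:QX)^(eulE t r b) * (pk t b)⁻¹) B']
    simp only [key]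
    rw [Finset.sum_add_distrib, Finset.mul_sum]
  rw [hsum]
  have h1 := Finset.sum_range_succ' g B'
  have h2 := Finset.sum_range_succ g B'
  have hg0 : (X:QX)^(eulE t r 0) * (pk t 0)⁻¹ = g 0 := by
    rw [hg]; simp only [eulE_zero]
  have hgB : (X:QX)^(r + eulE t (r+t) (B'+1-1)) * (pk t (B'+1-1))⁻¹
      = (X:QX)^r * g B' := by
    simp only [Nat.add_sub_cancel, hg, pow_add]; ring
  rw [hg0, hgB]
  linear_combination (-1 : QX) * h1 - (X:QX)^r * h2

lemma eulE_ge (t r b : ℕ) : r*b ≤ eulE t r b := by simp [eulE]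

lemma QX_inv_one : (1:QX)⁻¹ = 1 := by
  rw [PowerSeries.inv_eq_iff_mul_eq_one (by simp)]; simp

lemma euler_base (t : ℕ) (ht : 1 ≤ t) (N r J B : ℕ) (hr : N < r) (hB : 1 ≤ B) :
    Ecg N (∏ j ∈ Finset.range J, (1 + (X:QX)^(r + t*j)))
          (∑ b ∈ Finset.range B, (X:QX)^(eulE t r b) * (pk t b)⁻¹) := by
  have h1 : Ecg N (∏ j ∈ Finset.range J, (1 + (X:QX)^(r + t*j))) 1 := by
    have := Ecg.prod (N := N) (s := Finset.range J)
      (f := fun j => 1 + (X:QX)^(r + t*j)) (g := fun _ => 1)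
      (fun j _ => by
        have : Ecg N (1 + (X:QX)^(r + t*j)) (1 + 0) :=
          (Ecg.refl N 1).add (Ecg.Xpow (by omega))
        simpa using this)
    simpa using this
  have h2 : Ecg N (∑ b ∈ Finset.range B, (X:QX)^(eulE t r b) * (pk t b)⁻¹) 1 := by
    have := Ecg.sum (N := N) (s := Finset.range B)
      (f := fun b => (X:QX)^(eulE t r b) * (pk t b)⁻¹)
      (g := fun b => if b = 0 then 1 else 0)
      (fun b _ => by
        rcases Nat.eq_zero_or_pos b with hb | hb
        · subst hb
          simp [eulE_zero, pk, QX_inv_one, Ecg.refl]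
        · have hgt : N < eulE t r b := by
            have h1 := eulE_ge t r b
            have h2 : r * 1 ≤ r * b := Nat.mul_le_mul_left r hb
            omega
          simp only [if_neg (by omega : b ≠ 0)]
          exact Ecg.xpow_mul hgt _)
    rw [Finset.sum_ite_eq' (Finset.range B) 0 (fun _ => (1:QX))] at this
    simp only [Finset.mem_range] at this
    rwa [if_pos (by omega)] at this
  exact h1.trans h2.symm

lemma euler_cong (t : ℕ) (ht : 1 ≤ t) (N : ℕ) :
    ∀ fuel r J B, 1 ≤ r → N < r + fuel → N < t*J + r → N < r*B →
    Ecg N (∏ j ∈ Finset.range J, (1 + (X:QX)^(r + t*j)))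
          (∑ b ∈ Finset.range B, (X:QX)^(eulE t r b) * (pk t b)⁻¹) := by
  intro fuel
  induction fuel with
  | zero =>
      intro r J B hr hfuel hJ hB
      have hB1 : 1 ≤ B := by by_contra h; push_neg at h; interval_cases B <;> omega
      exact euler_base t ht N r J B (by omega) hB1
  | succ fuel ih =>
      intro r J B hr hfuel hJ hB
      have hB1 : 1 ≤ B := by by_contra h; push_neg at h; interval_cases B <;> omega
      by_cases hrN : N < r
      · exact euler_base t ht N r J B hrN hB1
      push_neg at hrN
      have hJ1 : 1 ≤ J := by by_contra h; push_neg at h; interval_cases J <;> omega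
      obtain ⟨J', rfl⟩ : ∃ J', J = J' + 1 := ⟨J - 1, by omega⟩
      have hprod : (∏ j ∈ Finset.range (J'+1), (1 + (X:QX)^(r + t*j)))
          = (1 + (X:QX)^r) * ∏ j ∈ Finset.range J', (1 + (X:QX)^((r+t) + t*j)) := by
        rw [Finset.prod_range_succ' (fun j => (1 + (X:QX)^(r + t*j))) J']
        simp only [Nat.mul_zero, Nat.add_zero]
        rw [mul_comm]
        congr 1
        refine Finset.prod_congr rfl fun i _ => ?_
        congr 2
        ring
      have hIH := ih (r+t) J' B (by omega) (by omega)
        (by have : t*(J'+1) = t*J' + t := by ring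
            omega)
        (by have : r*B ≤ (r+t)*B := Nat.mul_le_mul (by omega) (le_refl B)
            omega)
      have step1 : Ecg N (∏ j ∈ Finset.range (J'+1), (1 + (X:QX)^(r + t*j)))
          ((1 + (X:QX)^r) * ∑ b ∈ Finset.range B, (X:QX)^(eulE t (r+t) b) * (pk t b)⁻¹) := by
        rw [hprod]
        exact (Ecg.refl N (1 + (X:QX)^r)).mul hIH
      refine step1.trans ?_
      have hfe := euler_sum_fe t r B ht hB1
      have hW : Ecg N ((X:QX)^(r + eulE t (r+t) (B-1)) * (pk t (B-1))⁻¹) 0 := by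
        refine Ecg.xpow_mul ?_ _
        obtain ⟨B'', hBB⟩ : ∃ B'', B = B'' + 1 := ⟨B - 1, by omega⟩
        subst hBB
        simp only [Nat.add_sub_cancel]
        have h1 : (r+t)*B'' ≤ eulE t (r+t) B'' := eulE_ge t (r+t) B''
        have h2 : r*B'' ≤ (r+t)*B'' := Nat.mul_le_mul (by omega) (le_refl B'')
        have h3 : r*(B''+1) = r*B'' + r := by ring
        omega
      have : Ecg N ((1 + (X:QX)^r) * ∑ b ∈ Finset.range B, (X:QX)^(eulE t (r+t) b) * (pk t b)⁻¹)
          ((∑ b ∈ Finset.range B, (X:QX)^(eulE t r b) * (pk t b)⁻¹) + 0) := by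
        have heq : (1 + (X:QX)^r) * (∑ b ∈ Finset.range B, (X:QX)^(eulE t (r+t) b) * (pk t b)⁻¹)
            = (∑ b ∈ Finset.range B, (X:QX)^(eulE t r b) * (pk t b)⁻¹)
              + (X:QX)^(r + eulE t (r+t) (B-1)) * (pk t (B-1))⁻¹ := by
          rw [hfe]; ring
        rw [heq]
        exact (Ecg.refl N _).add hW
      simpa using this

section FinId
variable (t : ℕ)

/-- `(-X^t; X^t)_k` -/
noncomputable def mpk (k : ℕ) : QX := ∏ i ∈ Finset.range k, (1 + (X:QX)^(t*(i+1)))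

lemma mpk_const (k : ℕ) (ht : 1 ≤ t) : constantCoeff (R := ℚ) (mpk t k) = 1 := by
  rw [mpk, map_prod]
  refine Finset.prod_eq_one fun i _ => ?_
  have : t * (i+1) ≠ 0 := by positivity
  simp [this]

lemma mpk_ne_zero (k : ℕ) (ht : 1 ≤ t) : mpk t k ≠ 0 := fun h => by
  have := mpk_const t k ht; rw [h] at this; simp at this

lemma mpk_succ (k : ℕ) : mpk t (k+1) = mpk t k * (1 + (X:QX)^(t*(k+1))) :=
  Finset.prod_range_succ _ _

lemma pk2_eq (k : ℕ) : pk (2*t) k = pk t k * mpk t k := by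
  rw [pk, pk, mpk, ← Finset.prod_mul_distrib]
  refine Finset.prod_congr rfl fun i _ => ?_
  have h : 2*t*(i+1) = t*(i+1) + t*(i+1) := by ring
  rw [h, pow_add]
  ring

lemma one_sub_pow_unit (e : ℕ) (he : 1 ≤ e) :
    (1 - (X:QX)^e) * (1 - (X:QX)^e)⁻¹ = 1 := by
  refine PowerSeries.mul_inv_cancel _ ?_
  have : e ≠ 0 := by omega
  simp [this]

/-- summand of the finite identity -/
noncomputable def Tm (u v a : ℕ) : QX :=
  (X:QX)^(t*((u-a)*(v-a))) * (pk (2*t) a)⁻¹ * (pk t (u-a))⁻¹ * (pk t (v-a))⁻¹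

/-- telescoping term -/
noncomputable def Am (u v a : ℕ) : QX :=
  (X:QX)^(t*((u-a)*(v-a-1))) * (1 - (X:QX)^(t*(u-a))) * (1 - (X:QX)^(t*(v-a)))
    * (pk (2*t) a)⁻¹ * (pk t (u-a))⁻¹ * (pk t (v-a))⁻¹

/-- the B-form telescoping term -/
noncomputable def Bm (u v a : ℕ) : QX :=
  (X:QX)^(t*((u-a)*(v-a)+(v-a))) * (1 - (X:QX)^(2*t*a))
    * (pk (2*t) a)⁻¹ * (pk t (u-a))⁻¹ * (pk t (v-a))⁻¹

lemma Bm_zero (u v : ℕ) : Bm t u v 0 = 0 := by simp [Bm]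

lemma Am_top_left (v a : ℕ) : Am t a v a = 0 := by simp [Am]

lemma Am_top_right (u a : ℕ) : Am t u a a = 0 := by simp [Am]

lemma Bm_eq_Am (ht : 1 ≤ t) (u v a : ℕ) (hau : a + 1 ≤ u) (hav : a + 1 ≤ v) :
    Bm t u v (a+1) = Am t u v a := by
  obtain ⟨m, hm⟩ : ∃ m, u = m + (a+1) := ⟨u - (a+1), by omega⟩
  obtain ⟨w, hw⟩ : ∃ w, v = w + (a+1) := ⟨v - (a+1), by omega⟩
  subst hm hw
  have e1 : m + (a+1) - (a+1) = m := by omega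
  have e2 : w + (a+1) - (a+1) = w := by omega
  have e3 : m + (a+1) - a = m + 1 := by omega
  have e4 : w + (a+1) - a = w + 1 := by omega
  have e5 : w + 1 - 1 = w := by omega
  rw [Bm, Am, e1, e2, e3, e4, e5]
  have hip2 : (pk (2*t) (a+1))⁻¹ * (1 - (X:QX)^(2*t*(a+1))) = (pk (2*t) a)⁻¹ := by
    have := ip_succ (2*t) a (by omega)
    simpa using this
  have hipm : (pk t (m+1))⁻¹ * (1 - (X:QX)^(t*(m+1))) = (pk t m)⁻¹ := ip_succ t m ht
  have hipw : (pk t (w+1))⁻¹ * (1 - (X:QX)^(t*(w+1))) = (pk t w)⁻¹ := ip_succ t w ht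
  have hexp : t*((m+1)*w) = t*(m*w+w) := by ring
  rw [← hip2, ← hipm, ← hipw, hexp]
  ring

/-- the core per-term identity, case `a + 1 ≤ v`, `a ≤ u` -/
lemma core1 (ht : 1 ≤ t) (u v a : ℕ) (hau : a ≤ u) (hav : a + 1 ≤ v) :
    Tm t u v a * (1 - (X:QX)^(t*(2*v))) - Tm t u (v-1) a * (1 + (X:QX)^(t*(u+v)))
      = Bm t u v a - Am t u v a := by
  obtain ⟨m, hm⟩ : ∃ m, u = m + a := ⟨u - a, by omega⟩
  obtain ⟨w', hw⟩ : ∃ w', v = (w' + 1) + a := ⟨v - a - 1, by omega⟩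
  subst hm hw
  have e1 : m + a - a = m := by omega
  have e2 : w' + 1 + a - a = w' + 1 := by omega
  have e3 : w' + 1 + a - 1 = w' + a := by omega
  have e4 : w' + a - a = w' := by omega
  have e5 : w' + 1 - 1 = w' := by omega
  rw [Tm, Tm, Bm, Am, e1, e2, e3, e4, e5]
  have hipw : (pk t w')⁻¹ = (pk t (w'+1))⁻¹ * (1 - (X:QX)^(t*(w'+1))) :=
    (ip_succ t w' ht).symm
  rw [hipw]
  have h1 : t*(2*(w'+1+a)) = t*(2*(w'+1)) + 2*t*a := by ring
  have h2 : t*((m+a)+(w'+1+a)) = t*(m+w'+1) + 2*t*a := by ring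
  have h3 : 2*t*a = t*(2*a) := by ring
  rw [h1, h2, h3, pow_add, pow_add]
  have hm' : ∀ e : ℕ, (X:QX)^(t*e) = ((X:QX)^t)^e := fun e => pow_mul X t e
  rw [hm' (m*(w'+1)), hm' (2*(w'+1)), hm' (2*a), hm' (m*w'), hm' (m+w'+1),
      hm' (w'+1), hm' (m*(w'+1)+(w'+1)), hm' m]
  ring

lemma core2 (u v : ℕ) (hvu : v ≤ u) :
    Tm t u v v * (1 - (X:QX)^(t*(2*v))) = Bm t u v v - Am t u v v := by
  rw [Am_top_right, Tm, Bm, Nat.sub_self]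
  have h : t*(2*v) = 2*t*v := by ring
  simp only [Nat.mul_zero, Nat.add_zero, h]
  ring

lemma tele (u v K : ℕ) (h : ∀ a, a < K → Bm t u v (a+1) = Am t u v a)
    (hK : Am t u v K = 0) :
    ∑ a ∈ Finset.range (K+1), (Bm t u v a - Am t u v a) = 0 := by
  rw [Finset.sum_sub_distrib, Finset.sum_range_succ' (Bm t u v) K,
      Finset.sum_range_succ (Am t u v) K, Bm_zero, hK]
  rw [Finset.sum_congr rfl (fun a ha => h a (Finset.mem_range.mp ha))]
  ring

lemma Srec (ht : 1 ≤ t) (u v : ℕ) (hv : 1 ≤ v) :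
    (∑ a ∈ Finset.range (min u v + 1), Tm t u v a) * (1 - (X:QX)^(t*(2*v)))
      = (∑ a ∈ Finset.range (min u (v-1) + 1), Tm t u (v-1) a) * (1 + (X:QX)^(t*(u+v))) := by
  rw [← sub_eq_zero, Finset.sum_mul, Finset.sum_mul]
  rcases le_or_gt u (v-1) with hc | hc
  · have hmin1 : min u v = u := by omega
    have hmin2 : min u (v-1) = u := by omega
    rw [hmin1, hmin2, ← Finset.sum_sub_distrib]
    rw [Finset.sum_congr rfl (fun a ha => by
      have ha' := Finset.mem_range.mp ha
      exact core1 t ht u v a (by omega) (by omega))]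
    exact tele t u v u
      (fun a haa => Bm_eq_Am t ht u v a (by omega) (by omega))
      (Am_top_left t v u)
  · have hmin1 : min u v = v := by omega
    have hmin2 : min u (v-1) = v - 1 := by omega
    have hv1 : v - 1 + 1 = v := by omega
    rw [hmin1, hmin2, hv1]
    rw [Finset.sum_range_succ (fun a => Tm t u v a * (1 - (X:QX)^(t*(2*v)))) v]
    have hstep : ∀ a ∈ Finset.range v,
        Tm t u v a * (1 - (X:QX)^(t*(2*v)))
          = Tm t u (v-1) a * (1 + (X:QX)^(t*(u+v))) + (Bm t u v a - Am t u v a) := by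
      intro a ha
      have ha' := Finset.mem_range.mp ha
      have := core1 t ht u v a (by omega) (by omega)
      linear_combination this
    rw [Finset.sum_congr rfl hstep, Finset.sum_add_distrib]
    have hlast := core2 t u v (by omega)
    have htot := tele t u v v
      (fun a haa => Bm_eq_Am t ht u v a (by omega) (by omega))
      (Am_top_right t u v)
    rw [Finset.sum_range_succ (fun a => Bm t u v a - Am t u v a) v] at htot
    linear_combination hlast + htot

lemma finid (ht : 1 ≤ t) (u v : ℕ) :
    ∑ a ∈ Finset.range (min u v + 1), Tm t u v a
      = mpk t (u+v) * (pk (2*t) u)⁻¹ * (pk (2*t) v)⁻¹ := by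
  induction v with
  | zero =>
      have h0 : min u 0 + 1 = 1 := by omega
      rw [h0, Finset.range_one, Finset.sum_singleton, Tm]
      simp only [Nat.sub_zero, Nat.sub_self, Nat.mul_zero, pow_zero, Nat.add_zero, one_mul]
      have h2 : (pk (2*t) u)⁻¹ = (mpk t u)⁻¹ * (pk t u)⁻¹ := by
        rw [pk2_eq, PowerSeries.mul_inv_rev]
      have hpk0 : pk (2*t) 0 = 1 := by simp [pk]
      have hpkt0 : pk t 0 = 1 := by simp [pk]
      rw [h2, hpk0, hpkt0, QX_inv_one]
      have h3 : mpk t u * ((mpk t u)⁻¹ * (pk t u)⁻¹) * 1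
          = (mpk t u * (mpk t u)⁻¹) * (pk t u)⁻¹ := by ring
      rw [h3, PowerSeries.mul_inv_cancel _ (by rw [mpk_const t u ht]; norm_num)]
      ring
  | succ v' ih =>
      have hrec := Srec t ht u (v'+1) (by omega)
      simp only [Nat.add_sub_cancel] at hrec
      have hc1 : (1 - (X:QX)^(t*(2*(v'+1)))) * (1 - (X:QX)^(t*(2*(v'+1))))⁻¹ = 1 :=
        one_sub_pow_unit _ (Nat.succ_le_of_lt (by positivity))
      have hS : ∑ a ∈ Finset.range (min u (v'+1) + 1), Tm t u (v'+1) a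
          = (∑ a ∈ Finset.range (min u v' + 1), Tm t u v' a)
            * (1 + (X:QX)^(t*(u+(v'+1)))) * (1 - (X:QX)^(t*(2*(v'+1))))⁻¹ := by
        calc ∑ a ∈ Finset.range (min u (v'+1) + 1), Tm t u (v'+1) a
            = (∑ a ∈ Finset.range (min u (v'+1) + 1), Tm t u (v'+1) a)
              * ((1 - (X:QX)^(t*(2*(v'+1)))) * (1 - (X:QX)^(t*(2*(v'+1))))⁻¹) := by
              rw [hc1, mul_one]
          _ = ((∑ a ∈ Finset.range (min u (v'+1) + 1), Tm t u (v'+1) a)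
              * (1 - (X:QX)^(t*(2*(v'+1))))) * (1 - (X:QX)^(t*(2*(v'+1))))⁻¹ := by ring
          _ = _ := by rw [hrec]
      rw [hS, ih]
      have hip2 : (pk (2*t) (v'+1))⁻¹
          = (pk (2*t) v')⁻¹ * (1 - (X:QX)^(t*(2*(v'+1))))⁻¹ := by
        have h1 := ip_succ (2*t) v' (by omega)
        have he : 2*t*(v'+1) = t*(2*(v'+1)) := by ring
        rw [he] at h1
        calc (pk (2*t) (v'+1))⁻¹
            = (pk (2*t) (v'+1))⁻¹ * ((1 - (X:QX)^(t*(2*(v'+1))))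
              * (1 - (X:QX)^(t*(2*(v'+1))))⁻¹) := by rw [hc1, mul_one]
          _ = ((pk (2*t) (v'+1))⁻¹ * (1 - (X:QX)^(t*(2*(v'+1)))))
              * (1 - (X:QX)^(t*(2*(v'+1))))⁻¹ := by ring
          _ = _ := by rw [h1]
      rw [hip2]
      have hmp : mpk t (u+(v'+1)) = mpk t (u+v') * (1 + (X:QX)^(t*(u+(v'+1)))) := by
        have : u + (v'+1) = (u+v') + 1 := by omega
        rw [this, mpk_succ]
      rw [hmp]
      ring

end FinId

section Assembly
variable (t : ℕ)

lemma capExp_split (a b c d : ℕ) (ht : 1 ≤ t) :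
    capExp t a b c d
      = (2*t*a^2 + t*c^2 + t*d^2 + 2*t*a*c + 2*t*a*d + t*c*d + d - c)
        + eulE t (t*(2*a+c+d+1)) b := by
  obtain ⟨k, hk⟩ : ∃ k, b*(b-1) = 2*k := by
    rcases b with _ | b'
    · exact ⟨0, rfl⟩
    · obtain ⟨k, hk⟩ := Nat.even_mul_succ_self b'
      refine ⟨k, ?_⟩
      simp only [Nat.add_sub_cancel]
      have hcomm : (b'+1)*b' = b'*(b'+1) := by ring
      omega
  have hb2 : b*(b+1) = b*(b-1) + 2*b := by
    rcases b with _ | b'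
    · simp
    · simp only [Nat.add_sub_cancel]; ring
  have hd1 : b*(b+1)/2 = k + b := by omega
  have hd2 : b*(b-1)/2 = k := by omega
  have hcle : c ≤ t*c^2 := by
    calc c ≤ c^2 := Nat.le_self_pow two_ne_zero c
    _ = 1*c^2 := (one_mul _).symm
    _ ≤ t*c^2 := Nat.mul_le_mul_right _ ht
  have h1 : c ≤ 2*t*a^2 + t*(k+b) + t*c^2 + t*d^2 + 2*t*a*b + 2*t*a*c + 2*t*a*d
      + t*b*c + t*b*d + t*c*d + d := by omega
  have h2 : c ≤ 2*t*a^2 + t*c^2 + t*d^2 + 2*t*a*c + 2*t*a*d + t*c*d + d := by omega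
  rw [capExp, eulE, hd1, hd2]
  zify [h1, h2]
  push_cast
  ring

lemma e1_eq (a c d : ℕ) (ht : 1 ≤ t) :
    2*t*a^2 + t*c^2 + t*d^2 + 2*t*a*c + 2*t*a*d + t*c*d + d - c
      = eulE (2*t) (t-1) (a+c) + eulE (2*t) (t+1) (a+d) + t*(c*d) := by
  obtain ⟨ku, hku⟩ : ∃ k, (a+c)*((a+c)-1) = 2*k := by
    rcases Nat.eq_zero_or_pos (a+c) with h | h
    · exact ⟨0, by simp [h]⟩
    · obtain ⟨m, hm⟩ : ∃ m, a + c = m + 1 := ⟨a+c-1, by omega⟩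
      obtain ⟨k, hk⟩ := Nat.even_mul_succ_self m
      refine ⟨k, ?_⟩
      rw [hm]
      simp only [Nat.add_sub_cancel]
      have hcomm : (m+1)*m = m*(m+1) := by ring
      omega
  obtain ⟨kv, hkv⟩ : ∃ k, (a+d)*((a+d)-1) = 2*k := by
    rcases Nat.eq_zero_or_pos (a+d) with h | h
    · exact ⟨0, by simp [h]⟩
    · obtain ⟨m, hm⟩ : ∃ m, a + d = m + 1 := ⟨a+d-1, by omega⟩
      obtain ⟨k, hk⟩ := Nat.even_mul_succ_self m
      refine ⟨k, ?_⟩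
      rw [hm]
      simp only [Nat.add_sub_cancel]
      have hcomm : (m+1)*m = m*(m+1) := by ring
      omega
  have hdu : (a+c)*((a+c)-1)/2 = ku := by omega
  have hdv : (a+d)*((a+d)-1)/2 = kv := by omega
  have hcle : c ≤ t*c^2 := by
    calc c ≤ c^2 := Nat.le_self_pow two_ne_zero c
    _ = 1*c^2 := (one_mul _).symm
    _ ≤ t*c^2 := Nat.mul_le_mul_right _ ht
  have h2 : c ≤ 2*t*a^2 + t*c^2 + t*d^2 + 2*t*a*c + 2*t*a*d + t*c*d + d := by omega
  have hku' : ((a:ℤ)+c)*((a:ℤ)+c-1) = 2*ku := by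
    rcases Nat.eq_zero_or_pos (a+c) with h | h
    · obtain ha : a = 0 := by omega
      obtain hc : c = 0 := by omega
      subst ha; subst hc
      have hk0 : ku = 0 := by omega
      subst hk0; norm_num
    · zify [h] at hku
      push_cast at hku ⊢
      linarith [hku]
  have hkv' : ((a:ℤ)+d)*((a:ℤ)+d-1) = 2*kv := by
    rcases Nat.eq_zero_or_pos (a+d) with h | h
    · obtain ha : a = 0 := by omega
      obtain hd : d = 0 := by omega
      subst ha; subst hd
      have hk0 : kv = 0 := by omega
      subst hk0; norm_num
    · zify [h] at hkv
      push_cast at hkv ⊢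
      linarith [hkv]
  rw [eulE, eulE, hdu, hdv]
  zify [h2, ht]
  push_cast
  linear_combination (t:ℤ)*hku' + (t:ℤ)*hkv'

/-- two finsets agreeing below `N` give congruent products of `1 + X^m` -/
lemma prod_one_add_cong (N : ℕ) (A B : Finset ℕ)
    (h : ∀ m, m ≤ N → (m ∈ A ↔ m ∈ B)) :
    Ecg N (∏ m ∈ A, (1 + (X:QX)^m)) (∏ m ∈ B, (1 + (X:QX)^m)) := by
  classical
  have key : ∀ C : Finset ℕ, Ecg N (∏ m ∈ C, (1 + (X:QX)^m))
      (∏ m ∈ C.filter (fun m => m ≤ N), (1 + (X:QX)^m)) := by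
    intro C
    rw [← Finset.prod_filter_mul_prod_filter_not C (fun m => m ≤ N)]
    have h2 : Ecg N (∏ m ∈ C.filter (fun m => ¬ m ≤ N), (1 + (X:QX)^m)) 1 := by
      have := Ecg.prod (N := N) (s := C.filter (fun m => ¬ m ≤ N))
        (f := fun m => 1 + (X:QX)^m) (g := fun _ => 1)
        (fun m hm => by
          have := (Finset.mem_filter.mp hm).2
          have : Ecg N (1 + (X:QX)^m) (1+0) := (Ecg.refl N 1).add (Ecg.Xpow (by omega))
          simpa using this)
      simpa using this
    have := (Ecg.refl N (∏ m ∈ C.filter (fun m => m ≤ N), (1 + (X:QX)^m))).mul h2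
    simpa using this
  have hAB : A.filter (fun m => m ≤ N) = B.filter (fun m => m ≤ N) := by
    ext m
    simp only [Finset.mem_filter]
    constructor
    · rintro ⟨h1, h2⟩; exact ⟨(h m h2).mp h1, h2⟩
    · rintro ⟨h1, h2⟩; exact ⟨(h m h2).mpr h1, h2⟩
  exact (key A).trans (hAB ▸ (key B).symm)

/-- tail congruence for `mpk` -/
lemma mpk_tail (N K : ℕ) (hK : N + 1 ≤ K) (ht : 1 ≤ t) :
    Ecg N (mpk t K) (mpk t (N+1)) := by
  obtain ⟨L, rfl⟩ : ∃ L, K = (N+1) + L := ⟨K - (N+1), by omega⟩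
  rw [mpk, Finset.prod_range_add]
  have h2 : Ecg N (∏ i ∈ Finset.range L, (1 + (X:QX)^(t*((N+1)+i+1)))) 1 := by
    have := Ecg.prod (N := N) (s := Finset.range L)
      (f := fun i => 1 + (X:QX)^(t*((N+1)+i+1))) (g := fun _ => 1)
      (fun i _ => by
        have hgt : N < t*((N+1)+i+1) := by nlinarith
        have : Ecg N (1 + (X:QX)^(t*((N+1)+i+1))) (1+0) :=
          (Ecg.refl N 1).add (Ecg.Xpow hgt)
        simpa using this)
    simpa using this
  have := (Ecg.refl N (∏ i ∈ Finset.range (N+1), (1 + (X:QX)^(t*(i+1))))).mul h2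
  simpa [mpk] using this

lemma lhs_cong (N : ℕ) (ht : 3 < t) :
    Ecg N (∏ m ∈ (Finset.Icc 1 N).filter
        (fun m => m % (2 * t) = 0 ∨ m % (2 * t) = t - 1 ∨
                  m % (2 * t) = t ∨ m % (2 * t) = t + 1),
      (1 + (X:QX) ^ m))
      (mpk t (N+1)
        * (∏ j ∈ Finset.range (N+1), (1 + (X:QX)^((t-1) + 2*t*j)))
        * (∏ j ∈ Finset.range (N+1), (1 + (X:QX)^((t+1) + 2*t*j)))) := by
  classical
  set S1 := (Finset.range (N+1)).image (fun i => t*(i+1)) with hS1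
  set S2 := (Finset.range (N+1)).image (fun j => (t-1) + 2*t*j) with hS2
  set S3 := (Finset.range (N+1)).image (fun j => (t+1) + 2*t*j) with hS3
  have m1 : ∀ i, (t*(i+1)) % t = 0 := fun i => Nat.mul_mod_right t (i+1)
  have m2 : ∀ j, ((t-1) + 2*t*j) % t = t-1 := by
    intro j
    have h : (t-1) + 2*t*j = (t-1) + t*(2*j) := by ring_nf
    rw [h, Nat.add_mul_mod_self_left, Nat.mod_eq_of_lt (by omega)]
  have m3 : ∀ j, ((t+1) + 2*t*j) % t = 1 := by
    intro j
    have h : (t+1) + 2*t*j = 1 + t*(1 + 2*j) := by ring_nf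
    rw [h, Nat.add_mul_mod_self_left, Nat.mod_eq_of_lt (by omega)]
  have m4 : ∀ j, ((t-1) + 2*t*j) % (2*t) = t-1 := fun j => by
    rw [Nat.add_mul_mod_self_left, Nat.mod_eq_of_lt (by omega)]
  have m5 : ∀ j, ((t+1) + 2*t*j) % (2*t) = t+1 := fun j => by
    rw [Nat.add_mul_mod_self_left, Nat.mod_eq_of_lt (by omega)]
  have mem1 : ∀ m, m ∈ S1 ↔ ∃ i ≤ N, m = t*(i+1) := by
    intro m
    simp only [hS1, Finset.mem_image, Finset.mem_range]
    constructor
    · rintro ⟨i, hi, rfl⟩; exact ⟨i, by omega, rfl⟩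
    · rintro ⟨i, hi, rfl⟩; exact ⟨i, by omega, rfl⟩
  have mem2 : ∀ m, m ∈ S2 ↔ ∃ j ≤ N, m = (t-1) + 2*t*j := by
    intro m
    simp only [hS2, Finset.mem_image, Finset.mem_range]
    constructor
    · rintro ⟨j, hj, rfl⟩; exact ⟨j, by omega, rfl⟩
    · rintro ⟨j, hj, rfl⟩; exact ⟨j, by omega, rfl⟩
  have mem3 : ∀ m, m ∈ S3 ↔ ∃ j ≤ N, m = (t+1) + 2*t*j := by
    intro m
    simp only [hS3, Finset.mem_image, Finset.mem_range]
    constructor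
    · rintro ⟨j, hj, rfl⟩; exact ⟨j, by omega, rfl⟩
    · rintro ⟨j, hj, rfl⟩; exact ⟨j, by omega, rfl⟩
  have d12 : Disjoint S1 S2 := by
    rw [Finset.disjoint_left]
    intro m hm1 hm2
    obtain ⟨i, _, rfl⟩ := (mem1 m).mp hm1
    obtain ⟨j, _, hj⟩ := (mem2 _).mp hm2
    have ha := m1 i
    have hb := m2 j
    rw [← hj] at hb
    omega
  have d13 : Disjoint S1 S3 := by
    rw [Finset.disjoint_left]
    intro m hm1 hm2
    obtain ⟨i, _, rfl⟩ := (mem1 m).mp hm1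
    obtain ⟨j, _, hj⟩ := (mem3 _).mp hm2
    have ha := m1 i
    have hb := m3 j
    rw [← hj] at hb
    omega
  have d23 : Disjoint S2 S3 := by
    rw [Finset.disjoint_left]
    intro m hm1 hm2
    obtain ⟨i, _, rfl⟩ := (mem2 m).mp hm1
    obtain ⟨j, _, hj⟩ := (mem3 _).mp hm2
    have ha := m4 i
    have hb := m5 j
    rw [← hj] at hb
    omega
  have hprod : ∏ m ∈ (S1 ∪ S2) ∪ S3, (1 + (X:QX)^m)
      = mpk t (N+1)
        * (∏ j ∈ Finset.range (N+1), (1 + (X:QX)^((t-1) + 2*t*j)))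
        * (∏ j ∈ Finset.range (N+1), (1 + (X:QX)^((t+1) + 2*t*j))) := by
    rw [Finset.prod_union (by
      rw [Finset.disjoint_union_left]
      exact ⟨d13, d23⟩)]
    rw [Finset.prod_union d12]
    congr 1
    congr 1
    · rw [hS1, Finset.prod_image (fun i _ j _ h => by
        have := Nat.eq_of_mul_eq_mul_left (by omega : 0 < t) h
        omega), mpk]
    · rw [hS2, Finset.prod_image (fun i _ j _ h => by
        have h2 : 2*t*i = 2*t*j := by omega
        exact Nat.eq_of_mul_eq_mul_left (by omega : 0 < 2*t) h2)]
    · rw [hS3, Finset.prod_image (fun i _ j _ h => by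
        have h2 : 2*t*i = 2*t*j := by omega
        exact Nat.eq_of_mul_eq_mul_left (by omega : 0 < 2*t) h2)]
  rw [← hprod]
  apply prod_one_add_cong
  intro m hm
  simp only [Finset.mem_filter, Finset.mem_Icc, Finset.mem_union]
  constructor
  · rintro ⟨⟨hm1, _⟩, hcond⟩
    have hdm := Nat.div_add_mod m (2*t)
    rcases hcond with h | h | h | h
    · left; left
      refine (mem1 m).mpr ?_
      have hre : t*(2*(m/(2*t))) = 2*t*(m/(2*t)) := by ring
      have hdvd : t ∣ m := ⟨2*(m/(2*t)), by omega⟩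
      obtain ⟨s, rfl⟩ := hdvd
      have hs : 1 ≤ s := by
        rcases Nat.eq_zero_or_pos s with h0 | h0
        · rw [h0, Nat.mul_zero] at hm1; omega
        · exact h0
      have hsle : s ≤ t*s := Nat.le_mul_of_pos_left s (by omega)
      exact ⟨s-1, by omega, by rw [Nat.sub_add_cancel hs]⟩
    · left; right
      refine (mem2 m).mpr ⟨m/(2*t), ?_, by omega⟩
      have := Nat.div_le_self m (2*t)
      omega
    · left; left
      refine (mem1 m).mpr ?_
      have hre : t*(2*(m/(2*t))+1) = 2*t*(m/(2*t)) + t := by ring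
      have hdvd : t ∣ m := ⟨2*(m/(2*t)) + 1, by omega⟩
      obtain ⟨s, rfl⟩ := hdvd
      have hs : 1 ≤ s := by
        rcases Nat.eq_zero_or_pos s with h0 | h0
        · rw [h0, Nat.mul_zero] at hm1; omega
        · exact h0
      have hsle : s ≤ t*s := Nat.le_mul_of_pos_left s (by omega)
      exact ⟨s-1, by omega, by rw [Nat.sub_add_cancel hs]⟩
    · right
      refine (mem3 m).mpr ⟨m/(2*t), ?_, by omega⟩
      have := Nat.div_le_self m (2*t)
      omega
  · rintro ((h | h) | h)
    · obtain ⟨i, hi, rfl⟩ := (mem1 m).mp h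
      have hpos : 1 ≤ t*(i+1) := by
        have : 1*(i+1) ≤ t*(i+1) := Nat.mul_le_mul_right _ (by omega)
        omega
      refine ⟨⟨hpos, hm⟩, ?_⟩
      rcases Nat.even_or_odd (i+1) with ⟨q, hq⟩ | ⟨q, hq⟩
      · left
        have hth : t*(i+1) = 2*t*q := by rw [hq]; ring
        rw [hth, Nat.mul_mod_right]
      · right; right; left
        have hth : t*(i+1) = 2*t*q + t := by rw [hq]; ring
        rw [hth, Nat.mul_add_mod, Nat.mod_eq_of_lt (by omega)]
    · obtain ⟨j, hj, rfl⟩ := (mem2 m).mp h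
      exact ⟨⟨by omega, hm⟩, Or.inr (Or.inl (m4 j))⟩
    · obtain ⟨j, hj, rfl⟩ := (mem3 m).mp h
      exact ⟨⟨by omega, hm⟩, Or.inr (Or.inr (Or.inr (m5 j)))⟩

/-- exponent `e1` -/
def e1x (a c d : ℕ) : ℕ :=
  2*t*a^2 + t*c^2 + t*d^2 + 2*t*a*c + 2*t*a*d + t*c*d + d - c

/-- the reindexed summand -/
noncomputable def Gq (u v w : ℕ) : QX :=
  (X:QX)^(eulE (2*t) (t-1) u + eulE (2*t) (t+1) v)
    * ((mpk t (u+v))⁻¹ * Tm t u v w)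

lemma FG (ht : 1 ≤ t) (a c d : ℕ) :
    (X:QX)^(e1x t a c d) * (pk (2*t) a)⁻¹ * (pk t c)⁻¹ * (pk t d)⁻¹
        * (mpk t (2*a+c+d))⁻¹
      = Gq t (a+c) (a+d) a := by
  rw [Gq, Tm]
  have h1 : a + c - a = c := by omega
  have h2 : a + d - a = d := by omega
  have h3 : (a+c) + (a+d) = 2*a+c+d := by omega
  rw [h1, h2, h3]
  rw [e1x, e1_eq t a c d ht, pow_add]
  ring

/-- the condition for the reindexed sum -/
def condq (N u v w : ℕ) : Prop :=
  w ≤ u ∧ w ≤ v ∧ w ≤ N ∧ u - w ≤ N ∧ v - w ≤ N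

instance (N u v w : ℕ) : Decidable (condq N u v w) := by
  unfold condq; infer_instance

lemma reindex (N : ℕ) (ht : 1 ≤ t) :
    (∑ a ∈ Finset.range (N+1), ∑ c ∈ Finset.range (N+1), ∑ d ∈ Finset.range (N+1),
      (X:QX)^(e1x t a c d) * (pk (2*t) a)⁻¹ * (pk t c)⁻¹ * (pk t d)⁻¹
        * (mpk t (2*a+c+d))⁻¹)
    = ∑ u ∈ Finset.range (2*N+1), ∑ v ∈ Finset.range (2*N+1),
        ∑ w ∈ Finset.range (2*N+1),
          if condq N u v w then Gq t u v w else 0 := by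
  classical
  have hL : (∑ a ∈ Finset.range (N+1), ∑ c ∈ Finset.range (N+1),
      ∑ d ∈ Finset.range (N+1),
      (X:QX)^(e1x t a c d) * (pk (2*t) a)⁻¹ * (pk t c)⁻¹ * (pk t d)⁻¹
        * (mpk t (2*a+c+d))⁻¹)
      = ∑ p ∈ Finset.range (N+1) ×ˢ (Finset.range (N+1) ×ˢ Finset.range (N+1)),
          (X:QX)^(e1x t p.1 p.2.1 p.2.2) * (pk (2*t) p.1)⁻¹ * (pk t p.2.1)⁻¹
            * (pk t p.2.2)⁻¹ * (mpk t (2*p.1+p.2.1+p.2.2))⁻¹ := by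
    rw [Finset.sum_product]
    refine Finset.sum_congr rfl fun a _ => ?_
    rw [Finset.sum_product]
  have hR : (∑ u ∈ Finset.range (2*N+1), ∑ v ∈ Finset.range (2*N+1),
      ∑ w ∈ Finset.range (2*N+1), if condq N u v w then Gq t u v w else 0)
      = ∑ q ∈ Finset.range (2*N+1) ×ˢ (Finset.range (2*N+1) ×ˢ Finset.range (2*N+1)),
          (if condq N q.1 q.2.1 q.2.2 then Gq t q.1 q.2.1 q.2.2 else 0) := by
    rw [Finset.sum_product]
    refine Finset.sum_congr rfl fun u _ => ?_
    rw [Finset.sum_product]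
  rw [hL, hR, ← Finset.sum_filter]
  refine Finset.sum_nbij' (i := fun p => (p.1+p.2.1, p.1+p.2.2, p.1))
    (j := fun q => (q.2.2, q.1-q.2.2, q.2.1-q.2.2)) ?_ ?_ ?_ ?_ ?_
  · intro p hp
    simp only [Finset.mem_product, Finset.mem_range] at hp
    rw [Finset.mem_filter]; simp only [Finset.mem_filter, Finset.mem_product, Finset.mem_range, condq]
    refine ⟨⟨by omega, by omega, by omega⟩, by omega, by omega, by omega, by omega, by omega⟩
  · intro q hq
    rw [Finset.mem_filter] at hq; simp only [Finset.mem_filter, Finset.mem_product, Finset.mem_range, condq] at hq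
    simp only [Finset.mem_product, Finset.mem_range]
    refine ⟨by omega, by omega, by omega⟩
  · intro p hp
    simp only [Finset.mem_product, Finset.mem_range] at hp
    ext <;> simp <;> omega
  · intro q hq
    rw [Finset.mem_filter] at hq; simp only [Finset.mem_filter, Finset.mem_product, Finset.mem_range, condq] at hq
    ext <;> simp <;> omega
  · intro p hp
    exact FG t ht p.1 p.2.1 p.2.2

lemma rhs_cong (N : ℕ) (ht : 3 < t) :
    Ecg N (∑ a ∈ Finset.range (N+1), ∑ b ∈ Finset.range (N+1),
            ∑ c ∈ Finset.range (N+1), ∑ d ∈ Finset.range (N+1),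
        (X:QX)^(capExp t a b c d) * (pk (2*t) a)⁻¹ * (pk t b)⁻¹ * (pk t c)⁻¹ * (pk t d)⁻¹)
      (mpk t (N+1)
        * (∏ j ∈ Finset.range (N+1), (1 + (X:QX)^((t-1) + 2*t*j)))
        * (∏ j ∈ Finset.range (N+1), (1 + (X:QX)^((t+1) + 2*t*j)))) := by
  classical
  have ht1 : 1 ≤ t := by omega
  -- Step 1 : exact rearrangement, Euler sum over b extracted
  have step1 : (∑ a ∈ Finset.range (N+1), ∑ b ∈ Finset.range (N+1),
      ∑ c ∈ Finset.range (N+1), ∑ d ∈ Finset.range (N+1),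
        (X:QX)^(capExp t a b c d) * (pk (2*t) a)⁻¹ * (pk t b)⁻¹ * (pk t c)⁻¹ * (pk t d)⁻¹)
      = ∑ a ∈ Finset.range (N+1), ∑ c ∈ Finset.range (N+1), ∑ d ∈ Finset.range (N+1),
          ((X:QX)^(e1x t a c d) * (pk (2*t) a)⁻¹ * (pk t c)⁻¹ * (pk t d)⁻¹)
            * ∑ b ∈ Finset.range (N+1),
                (X:QX)^(eulE t (t*(2*a+c+d+1)) b) * (pk t b)⁻¹ := by
    refine Finset.sum_congr rfl fun a _ => ?_
    rw [Finset.sum_comm]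
    refine Finset.sum_congr rfl fun c _ => ?_
    rw [Finset.sum_comm]
    refine Finset.sum_congr rfl fun d _ => ?_
    rw [Finset.mul_sum]
    refine Finset.sum_congr rfl fun b _ => ?_
    rw [capExp_split t a b c d ht1, e1x, pow_add]
    ring
  -- Step 2 : per-(a,c,d) congruence for the inner Euler sum
  have step2 : ∀ a c d : ℕ,
      Ecg N (∑ b ∈ Finset.range (N+1),
          (X:QX)^(eulE t (t*(2*a+c+d+1)) b) * (pk t b)⁻¹)
        ((mpk t (2*a+c+d))⁻¹ * mpk t (N+1)) := by
    intro a c d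
    have hr1 : 1 ≤ t*(2*a+c+d+1) := by
      have : 1*1 ≤ t*(2*a+c+d+1) := Nat.mul_le_mul (by omega) (by omega)
      omega
    have hc3 : N < t*(N+1) + t*(2*a+c+d+1) := by
      have : N+1 ≤ t*(N+1) := Nat.le_mul_of_pos_left (N+1) (by omega)
      omega
    have hc4 : N < t*(2*a+c+d+1)*(N+1) := by
      have : 1*(N+1) ≤ (t*(2*a+c+d+1))*(N+1) := Nat.mul_le_mul hr1 (by omega)
      omega
    have heul := (euler_cong t ht1 N (N+1) (t*(2*a+c+d+1)) (N+1) (N+1)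
      hr1 (by omega) hc3 hc4).symm
    have hplit : (∏ j ∈ Finset.range (N+1), (1+(X:QX)^(t*(2*a+c+d+1)+t*j)))
        = (mpk t (2*a+c+d))⁻¹ * mpk t ((2*a+c+d)+(N+1)) := by
      have hsplit : mpk t ((2*a+c+d)+(N+1))
          = mpk t (2*a+c+d) * ∏ j ∈ Finset.range (N+1),
              (1+(X:QX)^(t*(2*a+c+d+1)+t*j)) := by
        rw [mpk, Finset.prod_range_add]
        congr 1
        refine Finset.prod_congr rfl fun j _ => ?_
        congr 1
        ring
      symm
      rw [hsplit, ← mul_assoc,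
        PowerSeries.inv_mul_cancel _ (by rw [mpk_const t _ ht1]; norm_num), one_mul]
    have htail : Ecg N (mpk t ((2*a+c+d)+(N+1))) (mpk t (N+1)) :=
      mpk_tail t N _ (by omega) ht1
    refine heul.trans ?_
    rw [hplit]
    exact (Ecg.refl N (mpk t (2*a+c+d))⁻¹).mul htail
  -- Step 5 : per-(u,v) treatment of the reindexed inner sum
  have step5 : ∀ u ∈ Finset.range (2*N+1), ∀ v ∈ Finset.range (2*N+1),
      Ecg N (∑ w ∈ Finset.range (2*N+1), if condq N u v w then Gq t u v w else 0)
        (((X:QX)^(eulE (2*t) (t-1) u) * (pk (2*t) u)⁻¹)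
          * ((X:QX)^(eulE (2*t) (t+1) v) * (pk (2*t) v)⁻¹)) := by
    intro u hu v hv
    rw [Finset.mem_range] at hu hv
    have hshrink : (∑ w ∈ Finset.range (2*N+1), if condq N u v w then Gq t u v w else 0)
        = ∑ w ∈ Finset.range (min u v + 1), if condq N u v w then Gq t u v w else 0 := by
      symm
      refine Finset.sum_subset (Finset.range_subset_range.mpr (by omega)) ?_
      intro x hx hnx
      rw [Finset.mem_range] at hx
      rw [Finset.mem_range] at hnx
      rw [if_neg]
      rintro ⟨h1, h2, -⟩
      omega
    rw [hshrink]
    have hdrop : Ecg N (∑ w ∈ Finset.range (min u v + 1),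
        if condq N u v w then Gq t u v w else 0)
        (∑ w ∈ Finset.range (min u v + 1), Gq t u v w) := by
      refine Ecg.sum fun w hw => ?_
      rw [Finset.mem_range] at hw
      by_cases hcond : condq N u v w
      · rw [if_pos hcond]; exact Ecg.refl N _
      · rw [if_neg hcond]
        have hbig : N < eulE (2*t) (t-1) u + eulE (2*t) (t+1) v := by
          have he1 := eulE_ge (2*t) (t-1) u
          have he2 := eulE_ge (2*t) (t+1) v
          have hm1 : 1*u ≤ (t-1)*u := Nat.mul_le_mul_right u (by omega)
          have hm2 : 1*v ≤ (t+1)*v := Nat.mul_le_mul_right v (by omega)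
          unfold condq at hcond
          push_neg at hcond
          omega
        exact (Ecg.xpow_mul hbig _).symm
    refine hdrop.trans (Ecg.of_eq ?_)
    have huns : (∑ w ∈ Finset.range (min u v + 1), Gq t u v w)
        = (X:QX)^(eulE (2*t) (t-1) u + eulE (2*t) (t+1) v)
          * ((mpk t (u+v))⁻¹ * ∑ w ∈ Finset.range (min u v + 1), Tm t u v w) := by
      rw [Finset.mul_sum, Finset.mul_sum]
      refine Finset.sum_congr rfl fun w _ => ?_
      rw [Gq]
    rw [huns, finid t ht1 u v]
    have hcancel : (X:QX)^(eulE (2*t) (t-1) u + eulE (2*t) (t+1) v)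
        * ((mpk t (u+v))⁻¹ * (mpk t (u+v) * (pk (2*t) u)⁻¹ * (pk (2*t) v)⁻¹))
        = (X:QX)^(eulE (2*t) (t-1) u + eulE (2*t) (t+1) v)
          * ((pk (2*t) u)⁻¹ * (pk (2*t) v)⁻¹)
          * ((mpk t (u+v))⁻¹ * mpk t (u+v)) := by ring
    rw [hcancel,
      PowerSeries.inv_mul_cancel _ (by rw [mpk_const t _ ht1]; norm_num), mul_one,
      pow_add]
    ring
  -- Step 7 : final Euler applications
  have hc7a : N < (t-1)*(2*N+1) := by
    have : 1*(2*N+1) ≤ (t-1)*(2*N+1) := Nat.mul_le_mul_right _ (by omega)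
    omega
  have hc7b : N < 2*t*(N+1) + (t-1) := by
    have : N+1 ≤ 2*t*(N+1) := Nat.le_mul_of_pos_left (N+1) (by omega)
    omega
  have step7 : Ecg N (∑ u ∈ Finset.range (2*N+1),
      (X:QX)^(eulE (2*t) (t-1) u) * (pk (2*t) u)⁻¹)
      (∏ j ∈ Finset.range (N+1), (1 + (X:QX)^((t-1) + 2*t*j))) :=
    (euler_cong (2*t) (by omega) N (N+1) (t-1) (N+1) (2*N+1)
      (by omega) (by omega) hc7b hc7a).symm
  have hc8a : N < (t+1)*(2*N+1) := by
    have : 1*(2*N+1) ≤ (t+1)*(2*N+1) := Nat.mul_le_mul_right _ (by omega)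
    omega
  have hc8b : N < 2*t*(N+1) + (t+1) := by
    have : N+1 ≤ 2*t*(N+1) := Nat.le_mul_of_pos_left (N+1) (by omega)
    omega
  have step8 : Ecg N (∑ v ∈ Finset.range (2*N+1),
      (X:QX)^(eulE (2*t) (t+1) v) * (pk (2*t) v)⁻¹)
      (∏ j ∈ Finset.range (N+1), (1 + (X:QX)^((t+1) + 2*t*j))) :=
    (euler_cong (2*t) (by omega) N (N+1) (t+1) (N+1) (2*N+1)
      (by omega) (by omega) hc8b hc8a).symm
  -- assemble everything
  rw [step1]
  have step3 : Ecg N (∑ a ∈ Finset.range (N+1), ∑ c ∈ Finset.range (N+1),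
      ∑ d ∈ Finset.range (N+1),
        ((X:QX)^(e1x t a c d) * (pk (2*t) a)⁻¹ * (pk t c)⁻¹ * (pk t d)⁻¹)
          * ∑ b ∈ Finset.range (N+1),
              (X:QX)^(eulE t (t*(2*a+c+d+1)) b) * (pk t b)⁻¹)
      (∑ a ∈ Finset.range (N+1), ∑ c ∈ Finset.range (N+1),
        ∑ d ∈ Finset.range (N+1),
        ((X:QX)^(e1x t a c d) * (pk (2*t) a)⁻¹ * (pk t c)⁻¹ * (pk t d)⁻¹)
          * ((mpk t (2*a+c+d))⁻¹ * mpk t (N+1))) :=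
    Ecg.sum fun a _ => Ecg.sum fun c _ => Ecg.sum fun d _ =>
      (Ecg.refl N _).mul (step2 a c d)
  refine step3.trans ?_
  have step4 : (∑ a ∈ Finset.range (N+1), ∑ c ∈ Finset.range (N+1),
      ∑ d ∈ Finset.range (N+1),
        ((X:QX)^(e1x t a c d) * (pk (2*t) a)⁻¹ * (pk t c)⁻¹ * (pk t d)⁻¹)
          * ((mpk t (2*a+c+d))⁻¹ * mpk t (N+1)))
      = mpk t (N+1) * (∑ a ∈ Finset.range (N+1), ∑ c ∈ Finset.range (N+1),
          ∑ d ∈ Finset.range (N+1),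
          (X:QX)^(e1x t a c d) * (pk (2*t) a)⁻¹ * (pk t c)⁻¹ * (pk t d)⁻¹
            * (mpk t (2*a+c+d))⁻¹) := by
    rw [Finset.mul_sum]
    refine Finset.sum_congr rfl fun a _ => ?_
    rw [Finset.mul_sum]
    refine Finset.sum_congr rfl fun c _ => ?_
    rw [Finset.mul_sum]
    refine Finset.sum_congr rfl fun d _ => ?_
    ring
  rw [step4, reindex t N ht1]
  have stepmid : Ecg N (∑ u ∈ Finset.range (2*N+1), ∑ v ∈ Finset.range (2*N+1),
      ∑ w ∈ Finset.range (2*N+1), if condq N u v w then Gq t u v w else 0)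
      ((∑ u ∈ Finset.range (2*N+1), (X:QX)^(eulE (2*t) (t-1) u) * (pk (2*t) u)⁻¹)
        * (∑ v ∈ Finset.range (2*N+1), (X:QX)^(eulE (2*t) (t+1) v) * (pk (2*t) v)⁻¹)) := by
    rw [Finset.sum_mul_sum]
    exact Ecg.sum fun u hu => Ecg.sum fun v hv => step5 u hu v hv
  have hfin : Ecg N (mpk t (N+1) * (∑ u ∈ Finset.range (2*N+1), ∑ v ∈ Finset.range (2*N+1),
      ∑ w ∈ Finset.range (2*N+1), if condq N u v w then Gq t u v w else 0))
      (mpk t (N+1)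
        * ((∏ j ∈ Finset.range (N+1), (1 + (X:QX)^((t-1) + 2*t*j)))
          * (∏ j ∈ Finset.range (N+1), (1 + (X:QX)^((t+1) + 2*t*j))))) :=
    (Ecg.refl N (mpk t (N+1))).mul (stepmid.trans (step7.mul step8))
  refine hfin.trans (Ecg.of_eq ?_)
  ring

end Assembly

/-- The analytical identity of Rogers–Ramanujan type for the mod-`t` generalization of the
first Capparelli identity:
`∏_{n ≡ 0, t-1, t, t+1 (mod 2t)} (1 + q^n)
  = Σ_{a,b,c,d ≥ 0} q^{Q_t(a,b,c,d) + (t/2)b - c + d} /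
      ((q^{2t};q^{2t})_a (q^t;q^t)_b (q^t;q^t)_c (q^t;q^t)_d)`,
stated coefficientwise as an identity of formal power series in `q` (factors and summands
of order greater than `n` do not affect the coefficient of `q^n`). -/
theorem stmt_9 (t : ℕ) (ht : 3 < t) :
    ∀ n : ℕ,
      (PowerSeries.coeff (R := ℚ) n)
        (∏ m ∈ (Finset.Icc 1 n).filter
            (fun m => m % (2 * t) = 0 ∨ m % (2 * t) = t - 1 ∨
                      m % (2 * t) = t ∨ m % (2 * t) = t + 1),
          (1 + (PowerSeries.X : PowerSeries ℚ) ^ m)) =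
      (PowerSeries.coeff (R := ℚ) n)
        (∑ a ∈ Finset.range (n + 1), ∑ b ∈ Finset.range (n + 1),
         ∑ c ∈ Finset.range (n + 1), ∑ d ∈ Finset.range (n + 1),
          (PowerSeries.X : PowerSeries ℚ) ^ (capExp t a b c d) *
            (∏ i ∈ Finset.range a, (1 - (PowerSeries.X : PowerSeries ℚ) ^ (2 * t * (i + 1))))⁻¹ *
            (∏ i ∈ Finset.range b, (1 - (PowerSeries.X : PowerSeries ℚ) ^ (t * (i + 1))))⁻¹ *
            (∏ i ∈ Finset.range c, (1 - (PowerSeries.X : PowerSeries ℚ) ^ (t * (i + 1))))⁻¹ *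
            (∏ i ∈ Finset.range d, (1 - (PowerSeries.X : PowerSeries ℚ) ^ (t * (i + 1))))⁻¹) := by
  intro n
  have h := (lhs_cong t n ht).trans ((rhs_cong t n ht).symm)
  exact h.coeff (le_refl n)
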